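/- Let Q be defined piecewise by Q(τ) = Σ_{j=0}^{k} (a_j/(k-j)!)·(τ-k)^{k-j} for τ ∈ [k, k+1), where a_0 = 1 and a_k = -(e^α/α)·Σ_{j=0}^{k-1} a_j/(k-j-1)!, with Q(τ) = 0 for τ < 0. Then for every non-integer τ > 0, Q is differentiable at τ with Q'(τ) = Q(τ-1). -/

import Mathlib

theorem Q_deriv (α : ℝ) (hα : 0 < α) (a : ℕ → ℝ) (Q : ℝ → ℝ)
    (ha0 : a 0 = 1)
    (ha : ∀ k : ℕ, 1 ≤ k →
      a k = -(Real.exp α / α) * ∑ j ∈ Finset.range k, a j / (Nat.factorial (k - j - 1)))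
    (hQneg : ∀ τ : ℝ, τ < 0 → Q τ = 0)
    (hQ : ∀ (k : ℕ) (τ : ℝ), (k : ℝ) ≤ τ → τ < k + 1 →
      Q τ = ∑ j ∈ Finset.range (k + 1), a j / (Nat.factorial (k - j)) * (τ - k) ^ (k - j)) :
    ∀ τ : ℝ, 0 < τ → (∀ n : ℤ, τ ≠ n) → HasDerivAt Q (Q (τ - 1)) τ := by
  intro τ hτ hne
  set k : ℕ := ⌊τ⌋.toNat with hkdef
  have hfl : (0:ℤ) ≤ ⌊τ⌋ := Int.floor_nonneg.mpr hτ.le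
  have hcast : (k : ℝ) = ((⌊τ⌋ : ℤ) : ℝ) := by
    rw [hkdef]
    exact_mod_cast congrArg (fun z : ℤ => (z : ℝ)) (Int.toNat_of_nonneg hfl)
  have hkτ : (k : ℝ) < τ := by
    rw [hcast]
    exact lt_of_le_of_ne (Int.floor_le τ) (fun h => hne ⌊τ⌋ h.symm)
  have hτ1 : τ < (k : ℝ) + 1 := by
    rw [hcast]; exact_mod_cast Int.lt_floor_add_one τ
  set P : ℝ → ℝ := fun x =>
    ∑ j ∈ Finset.range (k + 1), a j / (Nat.factorial (k - j)) * (x - k) ^ (k - j) with hP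
  have hEq : Q =ᶠ[nhds τ] P := by
    filter_upwards [Ioo_mem_nhds hkτ hτ1] with x hx
    exact hQ k x hx.1.le hx.2
  have hD : HasDerivAt P
      (∑ j ∈ Finset.range (k + 1),
        a j / (Nat.factorial (k - j)) * (((k - j : ℕ) : ℝ) * (τ - k) ^ (k - j - 1) * 1)) τ := by
    apply HasDerivAt.fun_sum
    intro j _
    exact (((hasDerivAt_id τ).sub_const (k:ℝ)).pow (k - j)).const_mul _
  have hkey : (∑ j ∈ Finset.range (k + 1),
      a j / (Nat.factorial (k - j)) * (((k - j : ℕ) : ℝ) * (τ - k) ^ (k - j - 1) * 1))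
      = Q (τ - 1) := by
    rcases k with _ | m
    · have h01 : τ < (0:ℝ) + 1 := by exact_mod_cast hτ1
      have : τ - 1 < 0 := by linarith
      rw [hQneg _ this]
      simp
    · rw [hQ m (τ - 1) (by push_cast at hkτ ⊢; linarith) (by push_cast at hτ1 ⊢; linarith)]
      rw [Finset.sum_range_succ]
      have hlast : a (m + 1) / (Nat.factorial (m + 1 - (m + 1))) *
          (((m + 1 - (m + 1) : ℕ) : ℝ) * (τ - (m + 1 : ℕ)) ^ (m + 1 - (m + 1) - 1) * 1) = 0 := by
        simp
      rw [hlast, add_zero]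
      apply Finset.sum_congr rfl
      intro j hj
      have hjm : j ≤ m := Nat.lt_succ_iff.mp (Finset.mem_range.mp hj)
      have h1 : m + 1 - j = (m - j) + 1 := by omega
      have h2 : (m - j) + 1 - 1 = m - j := rfl
      rw [h1, h2, Nat.factorial_succ]
      generalize m - j = n
      push_cast
      have hne0 : ((n.factorial : ℕ) : ℝ) ≠ 0 := by
        exact_mod_cast (Nat.factorial_pos n).ne'
      have hne1 : ((n : ℕ) : ℝ) + 1 ≠ 0 := by positivity
      have hxx : (τ - ((m:ℝ) + 1)) = (τ - 1 - (m:ℝ)) := by ring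
      rw [hxx]
      field_simp
  exact hkey ▸ hD.congr_of_eventuallyEq hEq
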